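/- Let S = S(m,ℓ) be the spider with m ≥ 3 legs each having ℓ ≥ 1 vertices and let 0 ≤ k < ℓ. For k < d < ℓ, let v_d and v_{d+1} denote the vertices at distances d and d+1 from the body on one fixed leg. Then Gain(S, C_S(k), Z(v_d)) ≤ Gain(S, C_S(k), Z(v_{d+1})); that is, the expected gain of Player 1 with strategy C_S(k) against a pure strategy at distance d > k from the body on a leg is nondecreasing in d. -/

import Mathlib

/-- The competitive-diffusion payoff of Player 1 with starting vertex `x` against
starting vertex `y`: the number of vertices strictly closer to `x` than to `y`. -/
noncomputable def gain {V : Type*} (G : SimpleGraph V) (x y : V) : ℕ :=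
  {u : V | G.dist u x < G.dist u y}.ncard

/-- The expected gain of Player 1 playing mixed strategy `X` against mixed strategy `Y`. -/
noncomputable def Gain {V : Type*} (G : SimpleGraph V) [Fintype V] (X Y : V → ℝ) : ℝ :=
  ∑ x : V, ∑ y : V, X x * Y y * (gain G x y : ℝ)

/-- The pure strategy `Z(v)` concentrated on vertex `v`. -/
def pureStrat {V : Type*} [DecidableEq V] (v : V) : V → ℝ := fun u => if u = v then 1 else 0

/-- Vertices of a spider with `m` legs each with `ℓ` vertices: `none` is the body,
`some (s, d)` is the vertex at distance `d+1` from the body on leg `s`. -/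
abbrev SpiderVert (m ℓ : ℕ) := Option (Fin m × Fin ℓ)

def spiderRel (m ℓ : ℕ) : SpiderVert m ℓ → SpiderVert m ℓ → Prop
  | none, some (_, d) => d.val = 0
  | some (s, d), some (s', d') => s = s' ∧ d.val + 1 = d'.val
  | _, _ => False

/-- The spider `S(m,ℓ)`: a body vertex to which `m` disjoint paths (legs), each with
`ℓ` vertices, are attached. -/
def Spider (m ℓ : ℕ) : SimpleGraph (SpiderVert m ℓ) := SimpleGraph.fromRel (spiderRel m ℓ)

/-- The mixed strategy `C_S(k)`: probability `1/(mk+1)` on the body and on each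
vertex at distance at most `k` from the body on each leg. -/
noncomputable def CS (m ℓ k : ℕ) : SpiderVert m ℓ → ℝ
  | none => 1 / (m * k + 1)
  | some (_, d) => if d.val + 1 ≤ k then 1 / (m * k + 1) else 0

/-- explicit distance function -/
def sd {m ℓ : ℕ} : SpiderVert m ℓ → SpiderVert m ℓ → ℕ
  | none, none => 0
  | none, some (_, j) => j.val + 1
  | some (_, i), none => i.val + 1
  | some (t, i), some (t', j) =>
      if t = t' then max i.val j.val - min i.val j.val else i.val + j.val + 2

lemma spider_adj_cases {m ℓ : ℕ} {u w : SpiderVert m ℓ}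
    (h : (Spider m ℓ).Adj u w) :
    (∃ (t : Fin m) (j : Fin ℓ), j.val = 0 ∧ ((u = none ∧ w = some (t, j)) ∨ (w = none ∧ u = some (t, j)))) ∨
    (∃ (t : Fin m) (i j : Fin ℓ), u = some (t, i) ∧ w = some (t, j) ∧
      (i.val + 1 = j.val ∨ j.val + 1 = i.val)) := by
  rw [Spider, SimpleGraph.fromRel_adj] at h
  obtain ⟨hne, h | h⟩ := h
  · match u, w with
    | none, some (t, j) => exact Or.inl ⟨t, j, h, Or.inl ⟨rfl, rfl⟩⟩
    | some (t, i), some (t', j) =>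
      obtain ⟨rfl, h2⟩ := h
      exact Or.inr ⟨t, i, j, rfl, rfl, Or.inl h2⟩
  · match u, w with
    | some (t, j), none => exact Or.inl ⟨t, j, h, Or.inr ⟨rfl, rfl⟩⟩
    | some (a, j), some (b, i) =>
      obtain ⟨h1, h2⟩ := h
      subst h1
      exact Or.inr ⟨_, j, i, rfl, rfl, Or.inr h2⟩

lemma sd_lip {m ℓ : ℕ} {u w : SpiderVert m ℓ} (h : (Spider m ℓ).Adj u w)
    (v : SpiderVert m ℓ) : sd u v ≤ sd w v + 1 := by
  rcases spider_adj_cases h with ⟨t, j, hj, ⟨rfl, rfl⟩ | ⟨rfl, rfl⟩⟩ |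
    ⟨t, i, j, rfl, rfl, hij⟩ <;>
  · match v with
    | none => simp [sd] <;> omega
    | some (t', i') =>
      simp only [sd]
      by_cases ht : t = t' <;> simp [ht] <;> try omega

lemma adj_body {m ℓ : ℕ} (t : Fin m) (h0 : 0 < ℓ) :
    (Spider m ℓ).Adj none (some (t, ⟨0, h0⟩)) := by
  rw [Spider, SimpleGraph.fromRel_adj]
  exact ⟨by simp, Or.inl rfl⟩

lemma adj_step {m ℓ : ℕ} (t : Fin m) (i : ℕ) (h : i + 1 < ℓ) :
    (Spider m ℓ).Adj (some (t, ⟨i, by omega⟩)) (some (t, ⟨i + 1, h⟩)) := by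
  rw [Spider, SimpleGraph.fromRel_adj]
  refine ⟨by simp [Fin.ext_iff], Or.inl ⟨rfl, rfl⟩⟩

def bodyWalk {m ℓ : ℕ} (t : Fin m) : (j : ℕ) → (h : j < ℓ) →
    (Spider m ℓ).Walk none (some (t, ⟨j, h⟩))
  | 0, h => SimpleGraph.Walk.cons (adj_body t h) SimpleGraph.Walk.nil
  | j + 1, h => (bodyWalk t j (by omega)).concat (adj_step t j h)

lemma bodyWalk_length {m ℓ : ℕ} (t : Fin m) (j : ℕ) (h : j < ℓ) :
    (bodyWalk t j h).length = j + 1 := by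
  induction j with
  | zero => rfl
  | succ j ih => simp [bodyWalk, SimpleGraph.Walk.length_concat, ih]

def upWalk {m ℓ : ℕ} (t : Fin m) (i : ℕ) : (c : ℕ) → (h : i + c < ℓ) →
    (Spider m ℓ).Walk (some (t, ⟨i, by omega⟩)) (some (t, ⟨i + c, h⟩))
  | 0, _ => SimpleGraph.Walk.nil
  | c + 1, h => (upWalk t i c (by omega)).concat (adj_step t (i + c) h)

lemma upWalk_length {m ℓ : ℕ} (t : Fin m) (i c : ℕ) (h : i + c < ℓ) :
    (upWalk t i c h).length = c := by
  induction c with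
  | zero => rfl
  | succ c ih => simp [upWalk, SimpleGraph.Walk.length_concat, ih]

lemma spider_reach {m ℓ : ℕ} (u v : SpiderVert m ℓ) : (Spider m ℓ).Reachable u v := by
  have key : ∀ w : SpiderVert m ℓ, (Spider m ℓ).Reachable none w := by
    rintro (_ | ⟨t, j⟩)
    · rfl
    · exact ⟨(Fin.mk_val j ▸ bodyWalk t j.val j.isLt : (Spider m ℓ).Walk none (some (t, j)))⟩
  exact (key u).symm.trans (key v)

lemma sd_le_walk {m ℓ : ℕ} {u v : SpiderVert m ℓ} (p : (Spider m ℓ).Walk u v) :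
    sd u v ≤ p.length := by
  induction p with
  | nil =>
    have : ∀ w : SpiderVert m ℓ, sd w w = 0 := by
      rintro (_ | ⟨t, i⟩) <;> simp [sd]
    simp [this]
  | cons h p ih =>
    calc sd _ _ ≤ sd _ _ + 1 := sd_lip h _
    _ ≤ _ := by simpa using Nat.add_le_add_right ih 1

lemma dist_le_sd {m ℓ : ℕ} (u v : SpiderVert m ℓ) : (Spider m ℓ).dist u v ≤ sd u v := by
  have leg : ∀ (t : Fin m) (i j : ℕ) (hi : i < ℓ) (hj : j < ℓ), i ≤ j →
      (Spider m ℓ).dist (some (t, ⟨i, hi⟩)) (some (t, ⟨j, hj⟩)) ≤ j - i := by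
    intro t i j hi hj hij
    obtain ⟨c, rfl⟩ : ∃ c, j = i + c := ⟨j - i, by omega⟩
    have := SimpleGraph.dist_le (upWalk t i c hj)
    rw [upWalk_length] at this
    omega
  have bodyd : ∀ (t : Fin m) (j : ℕ) (hj : j < ℓ),
      (Spider m ℓ).dist none (some (t, ⟨j, hj⟩)) ≤ j + 1 := by
    intro t j hj
    have := SimpleGraph.dist_le (bodyWalk t j hj)
    rwa [bodyWalk_length] at this
  match u, v with
  | none, none => simp [sd]
  | none, some (t, j) => simpa [sd] using bodyd t j.val j.isLt
  | some (t, i), none =>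
    rw [SimpleGraph.dist_comm]
    simpa [sd] using bodyd t i.val i.isLt
  | some (t, i), some (t', j) =>
    by_cases ht : t = t'
    · subst ht
      rcases le_total i.val j.val with hij | hij
      · simpa [sd, Nat.max_eq_right hij, Nat.min_eq_left hij] using
          leg t i.val j.val i.isLt j.isLt hij
      · rw [SimpleGraph.dist_comm]
        simpa [sd, Nat.max_eq_left hij, Nat.min_eq_right hij] using
          leg t j.val i.val j.isLt i.isLt hij
    · have := SimpleGraph.dist_le
        (((bodyWalk t i.val i.isLt).reverse).append (bodyWalk t' j.val j.isLt))
      rw [SimpleGraph.Walk.length_append, SimpleGraph.Walk.length_reverse,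
        bodyWalk_length, bodyWalk_length] at this
      simp only [Fin.eta] at this
      simp only [sd, if_neg ht]
      omega

lemma dist_eq_sd {m ℓ : ℕ} (u v : SpiderVert m ℓ) : (Spider m ℓ).dist u v = sd u v := by
  refine le_antisymm (dist_le_sd u v) ?_
  obtain ⟨p, hp⟩ := (spider_reach u v).exists_walk_length_eq_dist
  rw [← hp]
  exact sd_le_walk p

lemma CS_nonneg (m ℓ k : ℕ) (x : SpiderVert m ℓ) : 0 ≤ CS m ℓ k x := by
  match x with
  | none => simp only [CS]; positivity
  | some (t, j) =>
    simp only [CS]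
    split <;> positivity

lemma CS_support (m ℓ k : ℕ) (x : SpiderVert m ℓ) (hx : CS m ℓ k x ≠ 0) :
    x = none ∨ ∃ (t : Fin m) (j : Fin ℓ), x = some (t, j) ∧ j.val + 1 ≤ k := by
  match x with
  | none => exact Or.inl rfl
  | some (t, j) =>
    refine Or.inr ⟨t, j, rfl, ?_⟩
    by_contra h
    exact hx (by simp [CS, h])

lemma key_incl (m ℓ k : ℕ) (s : Fin m) (d : ℕ) (hd1 : k < d) (hd2 : d < ℓ)
    (x u : SpiderVert m ℓ) (hx : CS m ℓ k x ≠ 0)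
    (h : sd u x < sd u (some (s, ⟨d - 1, by omega⟩))) :
    sd u x < sd u (some (s, ⟨d, hd2⟩)) := by
  rcases CS_support m ℓ k x hx with rfl | ⟨t, j, rfl, hj⟩ <;>
  · match u with
    | none =>
      simp only [sd] at h ⊢
      first
      | omega
      | (by_cases ht : t = s <;> simp_all <;> omega)
    | some (t', i) =>
      simp only [sd] at h ⊢
      by_cases ht' : t' = s <;>
        first
        | (simp_all; omega)
        | (simp_all <;> omega)
        | (by_cases ht : t' = t <;> simp_all <;> omega)

lemma gain_mono (m ℓ k : ℕ) (s : Fin m) (d : ℕ) (hd1 : k < d) (hd2 : d < ℓ)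
    (x : SpiderVert m ℓ) (hx : CS m ℓ k x ≠ 0) :
    gain (Spider m ℓ) x (some (s, ⟨d - 1, by omega⟩)) ≤
      gain (Spider m ℓ) x (some (s, ⟨d, hd2⟩)) := by
  apply Set.ncard_le_ncard _ (Set.toFinite _)
  intro u hu
  simp only [Set.mem_setOf_eq, dist_eq_sd] at hu ⊢
  exact key_incl m ℓ k s d hd1 hd2 x u hx hu

lemma Gain_pure {V : Type*} (G : SimpleGraph V) [Fintype V] [DecidableEq V]
    (X : V → ℝ) (v : V) :
    Gain G X (pureStrat v) = ∑ x : V, X x * (gain G x v : ℝ) := by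
  unfold Gain pureStrat
  refine Finset.sum_congr rfl fun x _ => ?_
  rw [Finset.sum_eq_single v]
  · simp
  · intro y _ hy; simp [hy]
  · simp

/-- On the spider `S(m,ℓ)`, for `0 ≤ k < ℓ` and `k < d < ℓ`, the gain of `C_S(k)`
against the pure strategy at the vertex at distance `d` from the body on a leg is at
most that against the vertex at distance `d+1` on the same leg (nondecreasing in `d`). -/
theorem stmt_7 (m ℓ k : ℕ) (hm : 3 ≤ m) (hℓ : 1 ≤ ℓ) (hk : k < ℓ)
    (s : Fin m) (d : ℕ) (hd1 : k < d) (hd2 : d < ℓ) :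
    Gain (Spider m ℓ) (CS m ℓ k) (pureStrat (some (s, ⟨d - 1, by omega⟩) : SpiderVert m ℓ)) ≤
      Gain (Spider m ℓ) (CS m ℓ k) (pureStrat (some (s, ⟨d, hd2⟩) : SpiderVert m ℓ)) := by
  rw [Gain_pure, Gain_pure]
  apply Finset.sum_le_sum
  intro x _
  by_cases hx : CS m ℓ k x = 0
  · simp [hx]
  · exact mul_le_mul_of_nonneg_left
      (Nat.cast_le.mpr (gain_mono m ℓ k s d hd1 hd2 x hx)) (CS_nonneg m ℓ k x)
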